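/- The space S_{3,nat}(0,…,l) of natural cubic splines with knots 0,…,l (cubic splines s with s''(0) = s''(l) = 0) is a real vector space of dimension l+1, and the evaluation map s ↦ (s(0),…,s(l)) is a linear isomorphism from S_{3,nat}(0,…,l) onto ℝ^{l+1}. -/

import Mathlib

/-- `g : ℝ → ℝ` restricts to a cubic spline with knots `0, …, l`: it is `C²` on `[0, l]`
and coincides on each `[i, i+1]` with a polynomial of degree at most `3`. -/
def IsCubicSpline (l : ℕ) (g : ℝ → ℝ) : Prop :=
  ContDiffOn ℝ 2 g (Set.Icc 0 (l : ℝ)) ∧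
    ∀ i < l, ∃ P : Polynomial ℝ, P.natDegree ≤ 3 ∧
      ∀ t ∈ Set.Icc (i : ℝ) ((i : ℝ) + 1), g t = P.eval t

/-- A natural cubic spline: a cubic spline whose second derivative vanishes at both
endpoints `0` and `l`. -/
def IsNatCubicSpline (l : ℕ) (g : ℝ → ℝ) : Prop :=
  IsCubicSpline l g ∧
    iteratedDerivWithin 2 g (Set.Icc 0 (l : ℝ)) 0 = 0 ∧
    iteratedDerivWithin 2 g (Set.Icc 0 (l : ℝ)) (l : ℝ) = 0

/-- The set of natural cubic splines with knots `0, …, l`, viewed as functions on `[0, l]`. -/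
def natSplineSet (l : ℕ) : Set (Set.Icc (0 : ℝ) (l : ℝ) → ℝ) :=
  {f | ∃ g : ℝ → ℝ, IsNatCubicSpline l g ∧ ∀ x : Set.Icc (0 : ℝ) (l : ℝ), f x = g x}

open Polynomial Set Filter

noncomputable section

/-- truncated cube -/
def m3 (x : ℝ) : ℝ := max x 0 ^ 3

lemma m3_of_nonneg {x : ℝ} (h : 0 ≤ x) : m3 x = x ^ 3 := by simp [m3, max_eq_left h]
lemma m3_of_nonpos {x : ℝ} (h : x ≤ 0) : m3 x = 0 := by simp [m3, max_eq_right h]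

lemma abs_m3_le (y : ℝ) : |m3 y| ≤ |y| ^ 3 := by
  rcases le_or_gt y 0 with h | h
  · simp [m3_of_nonpos h, pow_nonneg (abs_nonneg y)]
  · rw [m3_of_nonneg h.le, abs_pow]

lemma hasDerivAt_m3 (x : ℝ) : HasDerivAt m3 (3 * max x 0 ^ 2) x := by
  rcases lt_trichotomy x 0 with h | h | h
  · have hev : m3 =ᶠ[nhds x] (fun _ => (0:ℝ)) := by
      filter_upwards [Iio_mem_nhds h] with y hy
      exact m3_of_nonpos (le_of_lt (mem_Iio.mp hy))
    rw [max_eq_right h.le]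
    simpa using (hasDerivAt_const x (0:ℝ)).congr_of_eventuallyEq hev
  · subst h
    rw [max_self, ← zero_pow (n := 2) (by norm_num), mul_comm]
    rw [hasDerivAt_iff_isLittleO]
    have h1 : (fun y : ℝ => m3 y - m3 0 - (y - 0) • ((0:ℝ)^2 * 3)) =O[nhds 0]
        (fun y : ℝ => y ^ 2) := by
      rw [Asymptotics.isBigO_iff]
      refine ⟨1, ?_⟩
      filter_upwards [Metric.ball_mem_nhds (0:ℝ) one_pos] with y hy
      simp only [Metric.mem_ball, Real.dist_eq, sub_zero] at hy
      have h2 : |m3 y| ≤ |y|^3 := abs_m3_le y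
      have : ‖m3 y - m3 0 - (y - 0) • ((0:ℝ)^2 * 3)‖ = |m3 y| := by
        simp [m3_of_nonpos (le_refl (0:ℝ))]
      rw [this]
      calc |m3 y| ≤ |y|^3 := h2
        _ = |y| * |y|^2 := by ring
        _ ≤ 1 * |y|^2 := mul_le_mul_of_nonneg_right hy.le (by positivity)
        _ = 1 * ‖y^2‖ := by simp [abs_pow]
    have h2 : (fun y : ℝ => y ^ 2) =o[nhds 0] (fun y : ℝ => y - 0) := by
      simpa using (Asymptotics.isLittleO_pow_id (𝕜 := ℝ) (n := 2) one_lt_two)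
    simpa using h1.trans_isLittleO h2
  · have hev : m3 =ᶠ[nhds x] (fun y => y ^ 3) := by
      filter_upwards [Ioi_mem_nhds h] with y hy
      exact m3_of_nonneg (le_of_lt (mem_Ioi.mp hy))
    rw [max_eq_left h.le]
    exact ((by simpa [mul_comm] using hasDerivAt_pow 3 x :
      HasDerivAt (fun y : ℝ => y ^ 3) (3 * x ^ 2) x)).congr_of_eventuallyEq hev

lemma hasDerivAt_m3' (x : ℝ) : HasDerivAt (fun y => 3 * max y 0 ^ 2) (6 * max x 0) x := by
  rcases lt_trichotomy x 0 with h | h | h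
  · have hev : (fun y : ℝ => 3 * max y 0 ^ 2) =ᶠ[nhds x] (fun _ => (0:ℝ)) := by
      filter_upwards [Iio_mem_nhds h] with y hy
      simp [max_eq_right (le_of_lt (mem_Iio.mp hy))]
    rw [max_eq_right h.le]
    simpa using (hasDerivAt_const x (0:ℝ)).congr_of_eventuallyEq hev
  · subst h
    rw [max_self, mul_zero]
    rw [hasDerivAt_iff_isLittleO]
    rw [Asymptotics.isLittleO_iff]
    intro c hc
    filter_upwards [Metric.ball_mem_nhds (0:ℝ) (show 0 < c/3 by positivity)] with y hy
    simp only [Metric.mem_ball, Real.dist_eq, sub_zero] at hy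
    have h1 : max y 0 ^ 2 ≤ |y| * |y| := by
      rcases le_or_gt y 0 with h | h
      · simpa [max_eq_right h] using mul_nonneg (abs_nonneg y) (abs_nonneg y)
      · rw [max_eq_left h.le, sq]
        nlinarith [abs_nonneg y, le_abs_self y]
    have hmx : max (0:ℝ) 0 = 0 := max_self 0
    have heq : ‖3 * max y 0 ^ 2 - 3 * max (0:ℝ) 0 ^ 2 - (y - 0) • (0:ℝ)‖
        = 3 * max y 0 ^ 2 := by
      rw [hmx]
      simp only [ne_eq, OfNat.ofNat_ne_zero, not_false_eq_true, zero_pow, mul_zero, sub_zero,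
        smul_eq_mul, Real.norm_eq_abs]
      rw [abs_of_nonneg (by positivity)]
    rw [heq]
    calc 3 * max y 0 ^ 2 ≤ 3 * (|y| * |y|) := by linarith
      _ ≤ 3 * ((c/3) * |y|) := by nlinarith [abs_nonneg y]
      _ = c * |y| := by ring
      _ = c * ‖y - 0‖ := by simp
  · have hev : (fun y : ℝ => 3 * max y 0 ^ 2) =ᶠ[nhds x] (fun y => 3 * y ^ 2) := by
      filter_upwards [Ioi_mem_nhds h] with y hy
      simp [max_eq_left (le_of_lt (mem_Ioi.mp hy))]
    rw [max_eq_left h.le]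
    have hd : HasDerivAt (fun y : ℝ => 3 * y ^ 2) (6 * x) x := by
      have := (hasDerivAt_pow 2 x).const_mul (3:ℝ)
      have h6 : x * (2 * 3) = 6 * x := by ring
      simpa [mul_comm, mul_assoc, mul_left_comm, h6] using this
    exact hd.congr_of_eventuallyEq hev

lemma deriv_m3 : deriv m3 = fun x => 3 * max x 0 ^ 2 := funext fun x => (hasDerivAt_m3 x).deriv

lemma contDiff_m3 : ContDiff ℝ 2 m3 := by
  rw [show (2 : WithTop ℕ∞) = 1 + 1 from rfl, contDiff_succ_iff_deriv]
  refine ⟨fun x => (hasDerivAt_m3 x).differentiableAt, by simp, ?_⟩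
  rw [deriv_m3, show (1 : WithTop ℕ∞) = 0 + 1 from rfl, contDiff_succ_iff_deriv]
  refine ⟨fun x => (hasDerivAt_m3' x).differentiableAt, by simp, ?_⟩
  rw [contDiff_zero]
  have h : deriv (fun y : ℝ => 3 * max y 0 ^ 2) = fun x => 6 * max x 0 :=
    funext fun x => (hasDerivAt_m3' x).deriv
  rw [h]
  exact continuous_const.mul (continuous_id.max continuous_const)


section
variable (l : ℕ) (a : Fin (l+1) → ℝ)

/-- junk-extended coefficients -/
def av (n : ℕ) : ℝ := if h : n < l + 1 then a ⟨n, h⟩ else 0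

/-- leading coefficient chosen to enforce the natural condition at `l` -/
def A3 : ℝ := -(∑ j ∈ Finset.Ico 1 l, av l a (j+1) * ((l:ℝ) - j)) / l

/-- the natural cubic spline with parameters `a` -/
def hfun : ℝ → ℝ := fun x =>
  av l a 0 + av l a 1 * x + A3 l a * x ^ 3 + ∑ j ∈ Finset.Ico 1 l, av l a (j+1) * m3 (x - j)

/-- the polynomial piece of `hfun` on `[i, i+1]` -/
def Ppoly (i : ℕ) : Polynomial ℝ :=
  C (av l a 0) + C (av l a 1) * X + C (A3 l a) * X ^ 3 +
    ∑ j ∈ Finset.Ico 1 (i+1), C (av l a (j+1)) * (X - C (j:ℝ)) ^ 3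

lemma Ppoly_natDegree_le (i : ℕ) : (Ppoly l a i).natDegree ≤ 3 := by
  refine (natDegree_add_le _ _).trans (max_le ((natDegree_add_le _ _).trans (max_le
    ((natDegree_add_le _ _).trans (max_le ?_ ?_)) ?_)) ?_)
  · simp [natDegree_C]
  · exact (natDegree_mul_le).trans (by simp)
  · exact (natDegree_mul_le).trans (by simp [natDegree_pow])
  · refine natDegree_sum_le_of_forall_le _ _ fun j hj => ?_
    refine (natDegree_mul_le).trans ?_
    have h : (X - (j : ℝ[X])).natDegree = 1 := by
      rw [show ((j : ℝ[X])) = C (j:ℝ) by simp]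
      exact natDegree_X_sub_C _
    simp [natDegree_pow, h, natDegree_C]

lemma hfun_eq_poly {i : ℕ} (hi : i < l) {x : ℝ} (hx : x ∈ Icc (i:ℝ) ((i:ℝ)+1)) :
    hfun l a x = (Ppoly l a i).eval x := by
  obtain ⟨hx1, hx2⟩ := hx
  have hsum : ∑ j ∈ Finset.Ico 1 l, av l a (j+1) * m3 (x - j)
      = ∑ j ∈ Finset.Ico 1 (i+1), av l a (j+1) * ((x - j) ^ 3) := by
    rw [← Finset.sum_subset (Finset.Ico_subset_Ico le_rfl hi)]
    · refine Finset.sum_congr rfl fun j hj => ?_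
      obtain ⟨hj1, hj2⟩ := Finset.mem_Ico.mp hj
      have : (j:ℝ) ≤ x := le_trans (by exact_mod_cast Nat.lt_succ_iff.mp hj2) hx1
      rw [m3_of_nonneg (by linarith)]
    · intro j hj hj'
      obtain ⟨hj1, hj2⟩ := Finset.mem_Ico.mp hj
      have hji : i + 1 ≤ j := by
        by_contra hc
        exact hj' (Finset.mem_Ico.mpr ⟨hj1, by omega⟩)
      have : x ≤ (j:ℝ) := le_trans hx2 (by exact_mod_cast hji)
      rw [m3_of_nonpos (by linarith), mul_zero]
  simp only [hfun, Ppoly, eval_add, eval_mul, eval_C, eval_X, eval_pow, eval_finset_sum,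
    eval_sub]
  rw [hsum]

lemma contDiff_hfun : ContDiff ℝ 2 (hfun l a) := by
  unfold hfun
  refine ContDiff.add (ContDiff.add (ContDiff.add ?_ ?_) ?_) ?_
  · exact contDiff_const
  · exact contDiff_const.mul contDiff_id
  · exact contDiff_const.mul (contDiff_id.pow 3)
  · refine ContDiff.sum fun j hj => ContDiff.mul contDiff_const ?_
    exact contDiff_m3.comp (contDiff_id.sub contDiff_const)

lemma hasDerivAt_hfun (x : ℝ) :
    HasDerivAt (hfun l a)
      (av l a 1 + A3 l a * (3 * x ^ 2)
        + ∑ j ∈ Finset.Ico 1 l, av l a (j+1) * (3 * max (x - j) 0 ^ 2)) x := by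
  unfold hfun
  have h1 : HasDerivAt (fun y : ℝ => av l a 0 + av l a 1 * y + A3 l a * y ^ 3)
      (av l a 1 + A3 l a * (3 * x ^ 2)) x := by
    have := ((hasDerivAt_id x).const_mul (av l a 1)).const_add (av l a 0)
    have h2 := (hasDerivAt_pow 3 x).const_mul (A3 l a)
    simpa [mul_comm, mul_assoc, mul_left_comm, pow_two] using this.fun_add h2
  have h2 : HasDerivAt (fun y : ℝ => ∑ j ∈ Finset.Ico 1 l, av l a (j+1) * m3 (y - j))
      (∑ j ∈ Finset.Ico 1 l, av l a (j+1) * (3 * max (x - j) 0 ^ 2)) x := by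
    refine HasDerivAt.fun_sum fun j hj => ?_
    have hc : HasDerivAt (fun y : ℝ => m3 (y - j)) (3 * max (x - j) 0 ^ 2) x := by
      have := (hasDerivAt_m3 (x - j)).comp x ((hasDerivAt_id x).sub_const (j:ℝ))
      simpa [Function.comp_def] using this
    exact hc.const_mul _
  exact h1.add h2

lemma hasDerivAt_hfun' (x : ℝ) :
    HasDerivAt (fun y : ℝ => av l a 1 + A3 l a * (3 * y ^ 2)
        + ∑ j ∈ Finset.Ico 1 l, av l a (j+1) * (3 * max (y - j) 0 ^ 2))
      (A3 l a * (6 * x)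
        + ∑ j ∈ Finset.Ico 1 l, av l a (j+1) * (6 * max (x - j) 0)) x := by
  have h1 : HasDerivAt (fun y : ℝ => av l a 1 + A3 l a * (3 * y ^ 2))
      (A3 l a * (6 * x)) x := by
    have h' := (((hasDerivAt_pow 2 x).const_mul (3:ℝ)).const_mul (A3 l a)).const_add (av l a 1)
    have e : A3 l a * (3 * ((2:ℕ) * x ^ (2-1))) = A3 l a * (6 * x) := by push_cast; ring
    rwa [e] at h'
  have h2 : HasDerivAt (fun y : ℝ => ∑ j ∈ Finset.Ico 1 l, av l a (j+1) * (3 * max (y - j) 0 ^ 2))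
      (∑ j ∈ Finset.Ico 1 l, av l a (j+1) * (6 * max (x - j) 0)) x := by
    refine HasDerivAt.fun_sum fun j hj => ?_
    have hc : HasDerivAt (fun y : ℝ => 3 * max (y - j) 0 ^ 2) (6 * max (x - j) 0) x := by
      have := (hasDerivAt_m3' (x - j)).comp x ((hasDerivAt_id x).sub_const (j:ℝ))
      simpa [Function.comp_def] using this
    exact hc.const_mul _
  exact h1.add h2

lemma deriv_deriv_hfun (x : ℝ) :
    deriv (deriv (hfun l a)) x
      = A3 l a * (6 * x) + ∑ j ∈ Finset.Ico 1 l, av l a (j+1) * (6 * max (x - j) 0) := by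
  have h1 : deriv (hfun l a) = fun y : ℝ => av l a 1 + A3 l a * (3 * y ^ 2)
      + ∑ j ∈ Finset.Ico 1 l, av l a (j+1) * (3 * max (y - j) 0 ^ 2) :=
    funext fun y => (hasDerivAt_hfun l a y).deriv
  rw [h1]
  exact (hasDerivAt_hfun' l a x).deriv
end

lemma iteratedDerivWithin_two_eq {g : ℝ → ℝ} (hg : ContDiff ℝ 2 g) {s : Set ℝ}
    (hs : UniqueDiffOn ℝ s) {x : ℝ} (hx : x ∈ s) :
    iteratedDerivWithin 2 g s x = deriv (deriv g) x := by
  have hdg : Differentiable ℝ g := hg.differentiable (by norm_num)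
  have hdg1 : Differentiable ℝ (deriv g) := by
    have h2 := (contDiff_succ_iff_deriv.mp
      (show ContDiff ℝ (1 + 1) g from hg)).2.2
    exact h2.differentiable one_ne_zero
  rw [iteratedDerivWithin_succ (n := 1)]
  have heq : Set.EqOn (iteratedDerivWithin 1 g s) (deriv g) s := by
    intro y hy
    rw [iteratedDerivWithin_one]
    exact (hdg y).derivWithin (hs.uniqueDiffWithinAt hy)
  rw [derivWithin_congr heq (heq hx)]
  exact (hdg1 x).derivWithin (hs.uniqueDiffWithinAt hx)

section
variable (l : ℕ) (a : Fin (l+1) → ℝ)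

lemma hfun_isNat (hl : 1 ≤ l) : IsNatCubicSpline l (hfun l a) := by
  have hlR : (0:ℝ) < l := by exact_mod_cast hl
  have hud : UniqueDiffOn ℝ (Icc (0:ℝ) (l:ℝ)) := uniqueDiffOn_Icc hlR
  refine ⟨⟨(contDiff_hfun l a).contDiffOn, fun i hi =>
    ⟨Ppoly l a i, Ppoly_natDegree_le l a i, fun t ht => hfun_eq_poly l a hi ht⟩⟩, ?_, ?_⟩
  · rw [iteratedDerivWithin_two_eq (contDiff_hfun l a) hud (left_mem_Icc.mpr hlR.le),
      deriv_deriv_hfun]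
    have hz : (∑ j ∈ Finset.Ico 1 l, av l a (j+1) * (6 * max ((0:ℝ) - j) 0)) = 0 := by
      apply Finset.sum_eq_zero
      intro j hj
      have : (0:ℝ) - j ≤ 0 := by
        have : (0:ℝ) ≤ j := by positivity
        linarith
      rw [max_eq_right this, mul_zero, mul_zero]
    simp [hz]
  · rw [iteratedDerivWithin_two_eq (contDiff_hfun l a) hud (right_mem_Icc.mpr hlR.le),
      deriv_deriv_hfun]
    have hmax : ∀ j ∈ Finset.Ico 1 l, av l a (j+1) * (6 * max ((l:ℝ) - j) 0)
        = 6 * (av l a (j+1) * ((l:ℝ) - j)) := by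
      intro j hj
      have hj2 := (Finset.mem_Ico.mp hj).2
      have : (0:ℝ) ≤ (l:ℝ) - j := by
        have : (j:ℝ) ≤ l := by exact_mod_cast hj2.le
        linarith
      rw [max_eq_left this]; ring
    rw [Finset.sum_congr rfl hmax, ← Finset.mul_sum]
    have : A3 l a * (6 * l) = -(6 * (∑ j ∈ Finset.Ico 1 l, av l a (j+1) * ((l:ℝ) - j))) := by
      rw [A3]; field_simp
    rw [this]; ring

lemma Ppoly_eq_zero (hl : 1 ≤ l) (h : ∀ x ∈ Icc (0:ℝ) (l:ℝ), hfun l a x = 0)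
    {i : ℕ} (hi : i < l) : Ppoly l a i = 0 := by
  apply Polynomial.eq_zero_of_infinite_isRoot
  have hsub : Icc (i:ℝ) ((i:ℝ)+1) ⊆ {x | (Ppoly l a i).IsRoot x} := by
    intro x hx
    have hx' : x ∈ Icc (0:ℝ) (l:ℝ) := by
      obtain ⟨h1, h2⟩ := hx
      constructor
      · have : (0:ℝ) ≤ i := by positivity
        linarith
      · have : (i:ℝ) + 1 ≤ l := by exact_mod_cast hi
        linarith
    have := h x hx'
    rw [hfun_eq_poly l a hi hx] at this
    exact this
  exact (Set.Icc_infinite (lt_add_one (i:ℝ))).mono hsub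

lemma hfun_vanish_coeffs (hl : 1 ≤ l) (h : ∀ x ∈ Icc (0:ℝ) (l:ℝ), hfun l a x = 0) :
    a = 0 := by
  have h0 : Ppoly l a 0 = 0 := Ppoly_eq_zero l a hl h hl
  have hav0 : av l a 0 = 0 := by
    have := congrArg (fun p => Polynomial.coeff p 0) h0
    simpa [Ppoly, coeff_C, coeff_X, Finset.Ico_self] using this
  have hav1 : av l a 1 = 0 := by
    have := congrArg (fun p => Polynomial.coeff p 1) h0
    simpa [Ppoly, coeff_C, coeff_X, Finset.Ico_self] using this
  have havj : ∀ j : ℕ, 1 ≤ j → j < l → av l a (j+1) = 0 := by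
    intro j hj1 hj2
    have hstep : Ppoly l a j = Ppoly l a (j-1) + C (av l a (j+1)) * (X - C (j:ℝ))^3 := by
      unfold Ppoly
      have hidx : j - 1 + 1 = j := Nat.succ_pred_eq_of_pos hj1
      rw [hidx, Finset.sum_Ico_succ_top hj1]
      ring
    have hz1 : Ppoly l a j = 0 := Ppoly_eq_zero l a hl h hj2
    have hz2 : Ppoly l a (j-1) = 0 := Ppoly_eq_zero l a hl h (by omega)
    rw [hz1, hz2, zero_add] at hstep
    have hne : (X - C (j:ℝ))^3 ≠ 0 := pow_ne_zero _ (X_sub_C_ne_zero _)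
    have := (mul_eq_zero.mp hstep.symm).resolve_right hne
    exact (C_eq_zero.mp this)
  funext n
  have hn : (n:ℕ) < l + 1 := n.isLt
  have han : a n = av l a (n:ℕ) := by
    rw [av, dif_pos hn]
  rw [Pi.zero_apply, han]
  match hnv : (n : ℕ), hn with
  | 0, _ => exact hav0
  | 1, _ => exact hav1
  | (k+2), hk => exact havj (k+1) (by omega) (by omega)
end

lemma poly_ftc (Q : Polynomial ℝ) (a b : ℝ) :
    (∫ x in a..b, Q.derivative.eval x) = Q.eval b - Q.eval a := by
  apply intervalIntegral.integral_eq_sub_of_hasDerivAt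
  · exact fun x _ => Q.hasDerivAt x
  · exact (Q.derivative.continuous).intervalIntegrable (μ := MeasureTheory.volume) a b

lemma poly_sq_integral_zero {Q : Polynomial ℝ} {c d : ℝ} (hcd : c < d)
    (h : (∫ x in c..d, (Q.eval x)^2) = 0) : Q = 0 := by
  by_contra hQ
  have hcont : Continuous fun x : ℝ => (Q.eval x)^2 := (Q.continuous).pow 2
  rw [intervalIntegral.integral_of_le hcd.le] at h
  have hint : MeasureTheory.IntegrableOn (fun x : ℝ => (Q.eval x)^2) (Ioc c d) :=
    hcont.integrableOn_Ioc (μ := MeasureTheory.volume)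
  have hae := (MeasureTheory.integral_eq_zero_iff_of_nonneg
    (fun x => sq_nonneg _) hint).mp h
  have hmeas : MeasurableSet {x : ℝ | ¬ (Q.eval x)^2 = 0} :=
    ((hcont.measurable (MeasurableSet.singleton 0).compl) : _)
  have h1 : MeasureTheory.volume ({x : ℝ | ¬ (Q.eval x)^2 = 0} ∩ Ioc c d) = 0 := by
    have h2 := MeasureTheory.ae_iff.mp hae
    simp only [Pi.zero_apply] at h2
    rwa [MeasureTheory.Measure.restrict_apply hmeas] at h2
  have hZ : MeasureTheory.volume {x : ℝ | Q.IsRoot x} = 0 :=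
    (Polynomial.finite_setOf_isRoot hQ).measure_zero _
  have hsub : Ioc c d ⊆ {x : ℝ | Q.IsRoot x} ∪ ({x : ℝ | ¬ (Q.eval x)^2 = 0} ∩ Ioc c d) := by
    intro x hx
    rcases eq_or_ne ((Q.eval x)^2) 0 with h0 | h0
    · left
      exact pow_eq_zero_iff (by norm_num) |>.mp h0
    · right; exact ⟨h0, hx⟩
  have hle := (MeasureTheory.measure_mono (μ := MeasureTheory.volume) hsub).trans (MeasureTheory.measure_union_le _ _)
  rw [hZ, h1, add_zero] at hle
  have : MeasureTheory.volume (Ioc c d) = ENNReal.ofReal (d - c) := Real.volume_Ioc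
  rw [this] at hle
  have : (0:ℝ) < d - c := by linarith
  simp [ENNReal.ofReal_eq_zero, not_lt.mpr] at hle
  linarith

lemma exists_piece {l : ℕ} (hl : 1 ≤ l) {x : ℝ} (hx : x ∈ Icc (0:ℝ) (l:ℝ)) :
    ∃ i : ℕ, i < l ∧ x ∈ Icc (i:ℝ) ((i:ℝ)+1) := by
  obtain ⟨h0, h1⟩ := hx
  refine ⟨min ⌊x⌋₊ (l-1), by omega, ?_, ?_⟩
  · have hm : (min ⌊x⌋₊ (l-1) : ℕ) ≤ ⌊x⌋₊ := min_le_left _ _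
    have := Nat.floor_le h0
    calc ((min ⌊x⌋₊ (l-1) : ℕ) : ℝ) ≤ (⌊x⌋₊ : ℝ) := by exact_mod_cast hm
      _ ≤ x := this
  · rcases le_or_gt (⌊x⌋₊) (l-1) with h | h
    · rw [min_eq_left h]
      have := Nat.lt_floor_add_one x
      linarith
    · rw [min_eq_right h.le]
      have : ((l-1 : ℕ) : ℝ) + 1 = (l : ℝ) := by
        have : l - 1 + 1 = l := by omega
        exact_mod_cast congrArg (Nat.cast (R := ℝ)) this
      linarith

lemma energy_zero {l : ℕ} (hl : 1 ≤ l) {g : ℝ → ℝ} (hg : IsNatCubicSpline l g)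
    (hz : ∀ i : ℕ, i ≤ l → g i = 0) : ∀ x ∈ Icc (0:ℝ) (l:ℝ), g x = 0 := by
  have hlR : (0:ℝ) < l := by exact_mod_cast hl
  have hud : UniqueDiffOn ℝ (Icc (0:ℝ) (l:ℝ)) := uniqueDiffOn_Icc hlR
  obtain ⟨⟨hsm, hpieces⟩, hend0, hendl⟩ := hg
  choose P hPdeg hPeq using hpieces
  set f1 := derivWithin g (Icc (0:ℝ) (l:ℝ)) with hf1def
  set f2 := derivWithin f1 (Icc (0:ℝ) (l:ℝ)) with hf2def
  have hf1C : ContDiffOn ℝ 1 f1 (Icc (0:ℝ) (l:ℝ)) :=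
    hsm.derivWithin hud (by norm_num)
  have hsub : ∀ i : ℕ, i < l → Icc (i:ℝ) ((i:ℝ)+1) ⊆ Icc (0:ℝ) (l:ℝ) := by
    intro i hi x hx
    obtain ⟨ha, hb⟩ := hx
    constructor
    · have : (0:ℝ) ≤ i := by positivity
      linarith
    · have : (i:ℝ)+1 ≤ l := by exact_mod_cast hi
      linarith
  -- a generic "restrict derivative to pieces" fact
  have keygen : ∀ (F : ℝ → ℝ) (R : ℕ → Polynomial ℝ),
      DifferentiableOn ℝ F (Icc (0:ℝ) (l:ℝ)) →
      (∀ i (hi : i < l), ∀ x ∈ Icc (i:ℝ) ((i:ℝ)+1), F x = (R i).eval x) →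
      ∀ i (hi : i < l), ∀ x ∈ Icc (i:ℝ) ((i:ℝ)+1),
        derivWithin F (Icc (0:ℝ) (l:ℝ)) x = (R i).derivative.eval x := by
    intro F R hFd hFR i hi x hx
    have husub : UniqueDiffWithinAt ℝ (Icc (i:ℝ) ((i:ℝ)+1)) x :=
      (uniqueDiffOn_Icc (lt_add_one _)) x hx
    rw [← derivWithin_subset (hsub i hi) husub (hFd x (hsub i hi hx))]
    rw [derivWithin_congr (fun y hy => hFR i hi y hy) (hFR i hi x hx)]
    exact ((R i).hasDerivAt x).hasDerivWithinAt.derivWithin husub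
  -- package P into a total function
  set PP : ℕ → Polynomial ℝ := fun i => if hi : i < l then P i hi else 0 with hPPdef
  have hPP : ∀ i (hi : i < l), ∀ x ∈ Icc (i:ℝ) ((i:ℝ)+1), g x = (PP i).eval x := by
    intro i hi x hx
    rw [hPPdef]; simp only [dif_pos hi]
    exact hPeq i hi x hx
  have key1 : ∀ i (hi : i < l), ∀ x ∈ Icc (i:ℝ) ((i:ℝ)+1),
      f1 x = (PP i).derivative.eval x :=
    keygen g PP (hsm.differentiableOn (by norm_num)) hPP
  have key2 : ∀ i (hi : i < l), ∀ x ∈ Icc (i:ℝ) ((i:ℝ)+1),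
      f2 x = (PP i).derivative.derivative.eval x :=
    keygen f1 (fun i => (PP i).derivative) (hf1C.differentiableOn one_ne_zero)
      (fun i hi x hx => key1 i hi x hx)
  have key3 : ∀ x ∈ Icc (0:ℝ) (l:ℝ), iteratedDerivWithin 2 g (Icc (0:ℝ) (l:ℝ)) x = f2 x := by
    intro x hx
    rw [iteratedDerivWithin_succ (n := 1)]
    exact derivWithin_congr (fun y hy => congrFun iteratedDerivWithin_one y)
      (congrFun iteratedDerivWithin_one x)
  have hmem0 : (0:ℝ) ∈ Icc (0:ℝ) (l:ℝ) := left_mem_Icc.mpr hlR.le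
  have hmeml : (l:ℝ) ∈ Icc (0:ℝ) (l:ℝ) := right_mem_Icc.mpr hlR.le
  have hf20 : f2 0 = 0 := by rw [← key3 0 hmem0]; exact hend0
  have hf2l : f2 (l:ℝ) = 0 := by rw [← key3 (l:ℝ) hmeml]; exact hendl
  -- knot membership facts
  have hmemL : ∀ i : ℕ, i < l → (i:ℝ) ∈ Icc (i:ℝ) ((i:ℝ)+1) :=
    fun i _ => ⟨le_rfl, by linarith [lt_add_one (i:ℝ)]⟩
  have hmemR : ∀ i : ℕ, i < l → ((i:ℝ)+1) ∈ Icc (i:ℝ) ((i:ℝ)+1) :=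
    fun i _ => ⟨by linarith [lt_add_one (i:ℝ)], le_rfl⟩
  -- integral of square of second derivative over each piece
  set F : ℕ → ℝ := fun k => f2 (k:ℝ) * f1 (k:ℝ) with hF
  have hintA : ∀ i, i < l →
      (∫ x in (i:ℝ)..((i:ℝ)+1), (((PP i).derivative.derivative).eval x)^2)
        = F (i+1) - F i := by
    intro i hi
    set Q := PP i with hQ
    set cc := Q.derivative.derivative.derivative.coeff 0 with hcc
    have hdeg : Q.natDegree ≤ 3 := by
      rw [hQ, hPPdef]; simp only [dif_pos hi]; exact hPdeg i hi
    have h3 : Q.derivative.derivative.derivative = C cc := by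
      apply eq_C_of_natDegree_le_zero
      have d1 := natDegree_derivative_le Q
      have d2 := natDegree_derivative_le Q.derivative
      have d3 := natDegree_derivative_le Q.derivative.derivative
      omega
    set R := Q.derivative.derivative * Q.derivative - C cc * Q with hR
    have hRder : R.derivative = (Q.derivative.derivative)^2 + C cc * Q.derivative
        - C cc * Q.derivative := by
      rw [hR, derivative_sub, derivative_mul, derivative_mul, h3, derivative_C]
      ring
    have hRder' : R.derivative = (Q.derivative.derivative)^2 := by rw [hRder]; ring
    have hint : (∫ x in (i:ℝ)..((i:ℝ)+1), ((Q.derivative.derivative).eval x)^2)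
        = R.eval ((i:ℝ)+1) - R.eval (i:ℝ) := by
      rw [← poly_ftc R]
      apply intervalIntegral.integral_congr
      intro x _
      rw [hRder']
      simp [eval_pow]
    rw [hint, hR]
    have hQi : Q.eval (i:ℝ) = 0 := by
      rw [← hPP i hi _ (hmemL i hi)]
      exact hz i (le_of_lt hi)
    have hQi1 : Q.eval ((i:ℝ)+1) = 0 := by
      rw [← hPP i hi _ (hmemR i hi)]
      have : ((i:ℝ)+1) = ((i+1 : ℕ) : ℝ) := by push_cast; ring
      rw [this]
      exact hz (i+1) hi
    have e1 : f1 (i:ℝ) = Q.derivative.eval (i:ℝ) := key1 i hi _ (hmemL i hi)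
    have e2 : f2 (i:ℝ) = Q.derivative.derivative.eval (i:ℝ) := key2 i hi _ (hmemL i hi)
    have e3 : f1 ((i:ℝ)+1) = Q.derivative.eval ((i:ℝ)+1) := key1 i hi _ (hmemR i hi)
    have e4 : f2 ((i:ℝ)+1) = Q.derivative.derivative.eval ((i:ℝ)+1) := key2 i hi _ (hmemR i hi)
    have ecast : ((i+1 : ℕ) : ℝ) = (i:ℝ)+1 := by push_cast; ring
    rw [hF]
    simp only [eval_sub, eval_mul, eval_C, hQi, hQi1, ecast, ← e1, ← e2, ← e3, ← e4]
    ring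
  have hsumzero : (∑ i ∈ Finset.range l,
      (∫ x in (i:ℝ)..((i:ℝ)+1), (((PP i).derivative.derivative).eval x)^2)) = 0 := by
    have : (∑ i ∈ Finset.range l,
        (∫ x in (i:ℝ)..((i:ℝ)+1), (((PP i).derivative.derivative).eval x)^2))
        = ∑ i ∈ Finset.range l, (F (i+1) - F i) := by
      apply Finset.sum_congr rfl
      intro i hi
      exact hintA i (Finset.mem_range.mp hi)
    rw [this, Finset.sum_range_sub F]
    rw [hF]
    simp only [Nat.cast_zero, hf2l, hf20, zero_mul]
    ring
  have hA0 : ∀ i ∈ Finset.range l,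
      (∫ x in (i:ℝ)..((i:ℝ)+1), (((PP i).derivative.derivative).eval x)^2) = 0 := by
    rw [← Finset.sum_eq_zero_iff_of_nonneg]
    · exact hsumzero
    · intro i _
      apply intervalIntegral.integral_nonneg (by linarith [lt_add_one (i:ℝ)])
      intro u _
      exact sq_nonneg _
  -- each piece is the zero polynomial
  have hPPzero : ∀ i, i < l → PP i = 0 := by
    intro i hi
    have hQ2 : (PP i).derivative.derivative = 0 :=
      poly_sq_integral_zero (lt_add_one (i:ℝ)) (hA0 i (Finset.mem_range.mpr hi))
    have hQ1 : (PP i).derivative = C ((PP i).derivative.coeff 0) :=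
      eq_C_of_derivative_eq_zero hQ2
    set c1 := (PP i).derivative.coeff 0
    have hlin : (PP i - C c1 * X).derivative = 0 := by
      rw [derivative_sub, derivative_mul, derivative_C, derivative_X, ← hQ1]
      ring
    have := eq_C_of_derivative_eq_zero hlin
    have hform : PP i = C c1 * X + C ((PP i - C c1 * X).coeff 0) := by
      have : PP i - C c1 * X = C ((PP i - C c1 * X).coeff 0) := this
      linear_combination (norm := ring_nf) this
    set c0 := (PP i - C c1 * X).coeff 0
    have hQi : (PP i).eval (i:ℝ) = 0 := by
      rw [← hPP i hi _ (hmemL i hi)]; exact hz i (le_of_lt hi)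
    have hQi1 : (PP i).eval ((i:ℝ)+1) = 0 := by
      rw [← hPP i hi _ (hmemR i hi)]
      have : ((i:ℝ)+1) = ((i+1 : ℕ) : ℝ) := by push_cast; ring
      rw [this]; exact hz (i+1) hi
    rw [hform] at hQi hQi1
    simp only [eval_add, eval_mul, eval_C, eval_X] at hQi hQi1
    have hc1 : c1 = 0 := by linarith
    have hc0 : c0 = 0 := by rw [hc1] at hQi; simpa using hQi
    rw [hform, hc1, hc0]
    simp
  intro x hx
  obtain ⟨i, hi, hxi⟩ := exists_piece hl hx
  rw [hPP i hi x hxi, hPPzero i hi]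
  simp

section
variable (l : ℕ)

lemma av_add (a b : Fin (l+1) → ℝ) (n : ℕ) : av l (a+b) n = av l a n + av l b n := by
  unfold av; split <;> simp

lemma av_smul (c : ℝ) (a : Fin (l+1) → ℝ) (n : ℕ) : av l (c • a) n = c * av l a n := by
  unfold av; split <;> simp

lemma A3_add (a b : Fin (l+1) → ℝ) : A3 l (a+b) = A3 l a + A3 l b := by
  unfold A3
  have h : ∑ j ∈ Finset.Ico 1 l, av l (a+b) (j+1) * ((l:ℝ) - j)
      = (∑ j ∈ Finset.Ico 1 l, av l a (j+1) * ((l:ℝ) - j))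
        + ∑ j ∈ Finset.Ico 1 l, av l b (j+1) * ((l:ℝ) - j) := by
    rw [← Finset.sum_add_distrib]
    exact Finset.sum_congr rfl fun j _ => by rw [av_add]; ring
  rw [h]; ring

lemma A3_smul (c : ℝ) (a : Fin (l+1) → ℝ) : A3 l (c • a) = c * A3 l a := by
  unfold A3
  have h : ∑ j ∈ Finset.Ico 1 l, av l (c • a) (j+1) * ((l:ℝ) - j)
      = c * ∑ j ∈ Finset.Ico 1 l, av l a (j+1) * ((l:ℝ) - j) := by
    rw [Finset.mul_sum]
    exact Finset.sum_congr rfl fun j _ => by rw [av_smul]; ring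
  rw [h]; ring

lemma hfun_add (a b : Fin (l+1) → ℝ) (x : ℝ) :
    hfun l (a+b) x = hfun l a x + hfun l b x := by
  unfold hfun
  have h : ∑ j ∈ Finset.Ico 1 l, av l (a+b) (j+1) * m3 (x - j)
      = (∑ j ∈ Finset.Ico 1 l, av l a (j+1) * m3 (x - j))
        + ∑ j ∈ Finset.Ico 1 l, av l b (j+1) * m3 (x - j) := by
    rw [← Finset.sum_add_distrib]
    exact Finset.sum_congr rfl fun j _ => by rw [av_add]; ring
  rw [av_add, av_add, A3_add, h]; ring

lemma hfun_smul (c : ℝ) (a : Fin (l+1) → ℝ) (x : ℝ) :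
    hfun l (c • a) x = c * hfun l a x := by
  unfold hfun
  have h : ∑ j ∈ Finset.Ico 1 l, av l (c • a) (j+1) * m3 (x - j)
      = c * ∑ j ∈ Finset.Ico 1 l, av l a (j+1) * m3 (x - j) := by
    rw [Finset.mul_sum]
    exact Finset.sum_congr rfl fun j _ => by rw [av_smul]; ring
  rw [av_smul, av_smul, A3_smul, h]; ring

end

/-- The space `S_{3,nat}(0,…,l)` of natural cubic splines is a real vector space of
dimension `l + 1`, and evaluation at the knots `0, …, l` is a linear isomorphism onto
`ℝ^{l+1}`. -/
theorem natSplineSpace_finrank_and_eval_equiv (l : ℕ) (hl : 1 ≤ l) :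
    ∃ S : Submodule ℝ (Set.Icc (0 : ℝ) (l : ℝ) → ℝ),
      (S : Set (Set.Icc (0 : ℝ) (l : ℝ) → ℝ)) = natSplineSet l ∧
        Module.finrank ℝ S = l + 1 ∧
        ∃ e : S ≃ₗ[ℝ] (Fin (l + 1) → ℝ),
          ∀ (f : S) (i : Fin (l + 1)),
            e f i = (f : Set.Icc (0 : ℝ) (l : ℝ) → ℝ)
              ⟨(i : ℕ), Set.mem_Icc.mpr
                ⟨by positivity, by exact_mod_cast Nat.lt_succ_iff.mp i.isLt⟩⟩ := by
  have hlR : (0:ℝ) < l := by exact_mod_cast hl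
  have hud : UniqueDiffOn ℝ (Icc (0:ℝ) (l:ℝ)) := uniqueDiffOn_Icc hlR
  have hmem0 : (0:ℝ) ∈ Icc (0:ℝ) (l:ℝ) := left_mem_Icc.mpr hlR.le
  have hmeml : (l:ℝ) ∈ Icc (0:ℝ) (l:ℝ) := right_mem_Icc.mpr hlR.le
  -- the submodule
  have hadd : ∀ {f₁ f₂ : Set.Icc (0:ℝ) (l:ℝ) → ℝ}, f₁ ∈ natSplineSet l → f₂ ∈ natSplineSet l →
      f₁ + f₂ ∈ natSplineSet l := by
    rintro f₁ f₂ ⟨g₁, ⟨⟨hg₁sm, hg₁p⟩, hg₁0, hg₁l⟩, hfg₁⟩ ⟨g₂, ⟨⟨hg₂sm, hg₂p⟩, hg₂0, hg₂l⟩, hfg₂⟩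
    refine ⟨g₁ + g₂, ⟨⟨hg₁sm.add hg₂sm, ?_⟩, ?_, ?_⟩, ?_⟩
    · intro i hi
      obtain ⟨P₁, hP₁d, hP₁⟩ := hg₁p i hi
      obtain ⟨P₂, hP₂d, hP₂⟩ := hg₂p i hi
      refine ⟨P₁ + P₂, (natDegree_add_le _ _).trans (max_le hP₁d hP₂d), fun t ht => ?_⟩
      simp only [Pi.add_apply, eval_add, hP₁ t ht, hP₂ t ht]
    · rw [iteratedDerivWithin_add (n := 2) hmem0 hud (hg₁sm _ hmem0) (hg₂sm _ hmem0), hg₁0, hg₂0, add_zero]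
    · rw [iteratedDerivWithin_add (n := 2) hmeml hud (hg₁sm _ hmeml) (hg₂sm _ hmeml), hg₁l, hg₂l, add_zero]
    · intro x; simp [hfg₁ x, hfg₂ x]
  have hzero : (0 : Set.Icc (0:ℝ) (l:ℝ) → ℝ) ∈ natSplineSet l := by
    refine ⟨fun _ => 0, ⟨⟨contDiffOn_const, fun i hi => ⟨0, by simp, by simp⟩⟩, ?_, ?_⟩,
      fun x => rfl⟩
    all_goals {
      have hz : (fun _ : ℝ => (0:ℝ)) = (0:ℝ) • (fun _ : ℝ => (0:ℝ)) := by funext; simp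
      rw [hz]
      first
      | rw [iteratedDerivWithin_const_smul hmem0 hud (0:ℝ) contDiffWithinAt_const, zero_smul]
      | rw [iteratedDerivWithin_const_smul hmeml hud (0:ℝ) contDiffWithinAt_const, zero_smul] }
  have hsmul : ∀ (c : ℝ) {f : Set.Icc (0:ℝ) (l:ℝ) → ℝ}, f ∈ natSplineSet l →
      c • f ∈ natSplineSet l := by
    rintro c f ⟨g, ⟨⟨hgsm, hgp⟩, hg0, hgl⟩, hfg⟩
    refine ⟨c • g, ⟨⟨hgsm.const_smul c, ?_⟩, ?_, ?_⟩, ?_⟩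
    · intro i hi
      obtain ⟨P, hPd, hP⟩ := hgp i hi
      refine ⟨Polynomial.C c * P, (natDegree_mul_le).trans (by simpa [natDegree_C] using hPd), fun t ht => ?_⟩
      simp [hP t ht, smul_eq_mul]
    · rw [iteratedDerivWithin_const_smul (n := 2) hmem0 hud c (hgsm _ hmem0), hg0, smul_zero]
    · rw [iteratedDerivWithin_const_smul (n := 2) hmeml hud c (hgsm _ hmeml), hgl, smul_zero]
    · intro x; simp [hfg x, smul_eq_mul]
  let S : Submodule ℝ (Set.Icc (0:ℝ) (l:ℝ) → ℝ) :=
    { carrier := natSplineSet l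
      add_mem' := hadd
      zero_mem' := hzero
      smul_mem' := fun c {f} hf => hsmul c hf }
  let E : S →ₗ[ℝ] (Fin (l+1) → ℝ) :=
    { toFun := fun f i => (f : Set.Icc (0:ℝ) (l:ℝ) → ℝ)
        ⟨(i:ℕ), Set.mem_Icc.mpr ⟨by positivity, by exact_mod_cast Nat.lt_succ_iff.mp i.isLt⟩⟩
      map_add' := fun f g => rfl
      map_smul' := fun c f => rfl }
  have einj0 : ∀ f : S, E f = 0 → f = 0 := by
    intro f hEf
    obtain ⟨g, hgnat, hfg⟩ : (f : Set.Icc (0:ℝ) (l:ℝ) → ℝ) ∈ natSplineSet l := f.2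
    have hz : ∀ i : ℕ, i ≤ l → g i = 0 := by
      intro i hi
      have h1 := congrFun hEf ⟨i, Nat.lt_succ_of_le hi⟩
      simp only [Pi.zero_apply] at h1
      have h2 : ((i:ℝ)) ∈ Icc (0:ℝ) (l:ℝ) := by
        constructor
        · positivity
        · exact_mod_cast hi
      calc g i = (f : Set.Icc (0:ℝ) (l:ℝ) → ℝ) ⟨(i:ℝ), h2⟩ := (hfg ⟨(i:ℝ), h2⟩).symm
        _ = 0 := h1
    have hvan := energy_zero hl hgnat hz
    apply Subtype.ext
    funext x
    rw [show ((f : S) : Set.Icc (0:ℝ) (l:ℝ) → ℝ) = f.1 from rfl, hfg x]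
    exact hvan x.1 x.2
  have einj : Function.Injective E := (injective_iff_map_eq_zero E).mpr einj0
  let Φ : (Fin (l+1) → ℝ) →ₗ[ℝ] S :=
    { toFun := fun a => ⟨fun x => hfun l a x.1,
        ⟨hfun l a, hfun_isNat l a hl, fun x => rfl⟩⟩
      map_add' := fun a b => Subtype.ext (funext fun x => hfun_add l a b x.1)
      map_smul' := fun c a => Subtype.ext (funext fun x => hfun_smul l c a x.1) }
  have hpsiinj : Function.Injective (E.comp Φ) := by
    apply (injective_iff_map_eq_zero (E.comp Φ)).mpr
    intro a ha
    have hΦa : Φ a = 0 := einj0 (Φ a) ha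
    have hvals : ∀ x ∈ Icc (0:ℝ) (l:ℝ), hfun l a x = 0 := by
      intro x hx
      exact congrFun (congrArg Subtype.val hΦa) ⟨x, hx⟩
    exact hfun_vanish_coeffs l a hl hvals
  have hpsisurj : Function.Surjective (E.comp Φ) :=
    LinearMap.injective_iff_surjective.mp hpsiinj
  have esurj : Function.Surjective E := fun y => by
    obtain ⟨a, ha⟩ := hpsisurj y
    exact ⟨Φ a, ha⟩
  let e : S ≃ₗ[ℝ] (Fin (l+1) → ℝ) := LinearEquiv.ofBijective E ⟨einj, esurj⟩
  refine ⟨S, rfl, ?_, e, fun f i => rfl⟩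
  rw [e.finrank_eq, Module.finrank_fin_fun]
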